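/- Let A = ⟨a₁, a₂⟩ be 2-dimensional and B = B₁ ⊕ B₂, C = C₁ ⊕ C₂ with B₁ = ⟨b₁,b₂⟩, B₂ = ⟨b₃,b₄⟩, C₁ = ⟨c₁,c₂⟩, C₂ = ⟨c₃,c₄⟩. Let φ₁ = a₁ ⊗ (b₁⊗c₁ + b₂⊗c₂) and φ₂ = a₂ ⊗ (b₃⊗c₃ + b₄⊗c₄). Define T(φ₁) = ⟨a₁⟩⊗B⊗C₁ + ⟨a₁⟩⊗B₁⊗C + A⊗⟨b₁⊗c₁ + b₂⊗c₂⟩ and T(φ₂) = ⟨a₂⟩⊗B⊗C₂ + ⟨a₂⟩⊗B₂⊗C + A⊗⟨b₃⊗c₃ + b₄⊗c₄⟩, as subspaces of A⊗B⊗C. Then the annihilator of T(φ₁) + T(φ₂) in (A⊗B⊗C)* is the 6-dimensional space spanned by a₂*⊗b₁*⊗c₂*, a₂*⊗b₂*⊗c₁*, a₂*⊗(b₁*⊗c₁* − b₂*⊗c₂*), a₁*⊗b₄*⊗c₃*, a₁*⊗b₃*⊗c₄*, a₁*⊗(b₄*⊗c₄* − b₃*⊗c₃*). -/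

import Mathlib

open TensorProduct

noncomputable section

abbrev A2 : Type := Fin 2 → ℂ
abbrev V4 : Type := Fin 4 → ℂ
abbrev T3 : Type := A2 ⊗[ℂ] (V4 ⊗[ℂ] V4)

def aa (i : Fin 2) : A2 := Pi.basisFun ℂ (Fin 2) i
def ee (i : Fin 4) : V4 := Pi.basisFun ℂ (Fin 4) i

/-- coordinate functionals: the dual bases -/
def aa' (i : Fin 2) : Module.Dual ℂ A2 := LinearMap.proj i
def ee' (i : Fin 4) : Module.Dual ℂ V4 := LinearMap.proj i

/-- The subspace `X ⊗ Y ⊗ Z` of `A ⊗ B ⊗ C`. -/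
def tp3 (X : Submodule ℂ A2) (Y Z : Submodule ℂ V4) : Submodule ℂ T3 :=
  Submodule.span ℂ {w | ∃ x ∈ X, ∃ y ∈ Y, ∃ z ∈ Z, w = x ⊗ₜ[ℂ] (y ⊗ₜ[ℂ] z)}

/-- `A ⊗ ⟨θ⟩` for `θ ∈ B ⊗ C`. -/
def modA (θ : V4 ⊗[ℂ] V4) : Submodule ℂ T3 :=
  LinearMap.range ((TensorProduct.mk ℂ A2 (V4 ⊗[ℂ] V4)).flip θ)

/-- the functional `f ⊗ g ⊗ h ∈ (A⊗B⊗C)*`. -/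
def dfun (f : Module.Dual ℂ A2) (g h : Module.Dual ℂ V4) : Module.Dual ℂ T3 :=
  TensorProduct.dualDistrib ℂ A2 (V4 ⊗[ℂ] V4)
    (f ⊗ₜ[ℂ] (TensorProduct.dualDistrib ℂ V4 V4 (g ⊗ₜ[ℂ] h)))

/-- tangent space `T(φ₁) = ⟨a₁⟩⊗B⊗C₁ + ⟨a₁⟩⊗B₁⊗C + A⊗⟨b₁⊗c₁ + b₂⊗c₂⟩` -/
def Tφ₁ : Submodule ℂ T3 :=
  tp3 (Submodule.span ℂ {aa 0}) ⊤ (Submodule.span ℂ {ee 0, ee 1}) ⊔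
    tp3 (Submodule.span ℂ {aa 0}) (Submodule.span ℂ {ee 0, ee 1}) ⊤ ⊔
    modA (ee 0 ⊗ₜ[ℂ] ee 0 + ee 1 ⊗ₜ[ℂ] ee 1)

/-- tangent space `T(φ₂) = ⟨a₂⟩⊗B⊗C₂ + ⟨a₂⟩⊗B₂⊗C + A⊗⟨b₃⊗c₃ + b₄⊗c₄⟩` -/
def Tφ₂ : Submodule ℂ T3 :=
  tp3 (Submodule.span ℂ {aa 1}) ⊤ (Submodule.span ℂ {ee 2, ee 3}) ⊔
    tp3 (Submodule.span ℂ {aa 1}) (Submodule.span ℂ {ee 2, ee 3}) ⊤ ⊔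
    modA (ee 2 ⊗ₜ[ℂ] ee 2 + ee 3 ⊗ₜ[ℂ] ee 3)

lemma dfun_apply (f : Module.Dual ℂ A2) (g h : Module.Dual ℂ V4) (x : A2) (y z : V4) :
    dfun f g h (x ⊗ₜ[ℂ] (y ⊗ₜ[ℂ] z)) = f x * (g y * h z) := by
  simp [dfun, TensorProduct.dualDistrib_apply]

lemma aa'_aa (i j : Fin 2) : aa' i (aa j) = if i = j then 1 else 0 := by
  simp [aa, aa', Pi.single_apply]

lemma ee'_ee (i j : Fin 4) : ee' i (ee j) = if i = j then 1 else 0 := by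
  simp [ee, ee', Pi.single_apply]

def B3 : Module.Basis (Fin 2 × Fin 4 × Fin 4) ℂ T3 :=
  (Pi.basisFun ℂ (Fin 2)).tensorProduct
    ((Pi.basisFun ℂ (Fin 4)).tensorProduct (Pi.basisFun ℂ (Fin 4)))

lemma B3_apply (i : Fin 2) (j k : Fin 4) : B3 (i, j, k) = aa i ⊗ₜ[ℂ] (ee j ⊗ₜ[ℂ] ee k) := by
  simp [B3, Module.Basis.tensorProduct_apply, aa, ee]

lemma mem_tp3 {X : Submodule ℂ A2} {Y Z : Submodule ℂ V4} {x : A2} {y z : V4}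
    (hx : x ∈ X) (hy : y ∈ Y) (hz : z ∈ Z) : x ⊗ₜ[ℂ] (y ⊗ₜ[ℂ] z) ∈ tp3 X Y Z :=
  Submodule.subset_span ⟨x, hx, y, hy, z, hz, rfl⟩


lemma mem_ann_of_le {W : Submodule ℂ T3} {v : Module.Dual ℂ T3}
    (h : W ≤ LinearMap.ker v) : v ∈ W.dualAnnihilator :=
  (Submodule.mem_dualAnnihilator v).mpr fun w hw => LinearMap.mem_ker.mp (h hw)

lemma tp3_le_ker (v : Module.Dual ℂ T3) {X : Submodule ℂ A2} {Y Z : Submodule ℂ V4}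
    (h : ∀ x ∈ X, ∀ y ∈ Y, ∀ z ∈ Z, v (x ⊗ₜ[ℂ] (y ⊗ₜ[ℂ] z)) = 0) :
    tp3 X Y Z ≤ LinearMap.ker v := by
  rw [tp3, Submodule.span_le]
  rintro w ⟨x, hx, y, hy, z, hz, rfl⟩
  exact LinearMap.mem_ker.mpr (h x hx y hy z hz)

lemma modA_le_ker (v : Module.Dual ℂ T3) (θ : V4 ⊗[ℂ] V4)
    (h : ∀ x : A2, v (x ⊗ₜ[ℂ] θ) = 0) : modA θ ≤ LinearMap.ker v := by
  rintro w ⟨x, rfl⟩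
  rw [LinearMap.mem_ker, LinearMap.flip_apply, TensorProduct.mk_apply]
  exact h x


set_option maxHeartbeats 2000000

/-- The annihilator of `T(φ₁) + T(φ₂)` in `(A⊗B⊗C)*` is the 6-dimensional space
spanned by `a₂*⊗b₁*⊗c₂*`, `a₂*⊗b₂*⊗c₁*`, `a₂*⊗(b₁*⊗c₁* − b₂*⊗c₂*)`,
`a₁*⊗b₄*⊗c₃*`, `a₁*⊗b₃*⊗c₄*`, `a₁*⊗(b₄*⊗c₄* − b₃*⊗c₃*)`. -/
theorem annihilator_eq :
    (Tφ₁ ⊔ Tφ₂).dualAnnihilator =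
      Submodule.span ℂ
        {dfun (aa' 1) (ee' 0) (ee' 1), dfun (aa' 1) (ee' 1) (ee' 0),
         dfun (aa' 1) (ee' 0) (ee' 0) - dfun (aa' 1) (ee' 1) (ee' 1),
         dfun (aa' 0) (ee' 3) (ee' 2), dfun (aa' 0) (ee' 2) (ee' 3),
         dfun (aa' 0) (ee' 3) (ee' 3) - dfun (aa' 0) (ee' 2) (ee' 2)} := by
  apply le_antisymm
  · -- annihilator ⊆ span
    intro f hf
    rw [Submodule.mem_dualAnnihilator] at hf
    have m1 : tp3 (Submodule.span ℂ {aa 0}) ⊤ (Submodule.span ℂ {ee 0, ee 1}) ≤ Tφ₁ ⊔ Tφ₂ :=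
      (le_sup_left.trans le_sup_left).trans le_sup_left
    have m2 : tp3 (Submodule.span ℂ {aa 0}) (Submodule.span ℂ {ee 0, ee 1}) ⊤ ≤ Tφ₁ ⊔ Tφ₂ :=
      (le_sup_right.trans le_sup_left).trans le_sup_left
    have m3 : modA (ee 0 ⊗ₜ[ℂ] ee 0 + ee 1 ⊗ₜ[ℂ] ee 1) ≤ Tφ₁ ⊔ Tφ₂ :=
      le_sup_right.trans le_sup_left
    have m4 : tp3 (Submodule.span ℂ {aa 1}) ⊤ (Submodule.span ℂ {ee 2, ee 3}) ≤ Tφ₁ ⊔ Tφ₂ :=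
      (le_sup_left.trans le_sup_left).trans le_sup_right
    have m5 : tp3 (Submodule.span ℂ {aa 1}) (Submodule.span ℂ {ee 2, ee 3}) ⊤ ≤ Tφ₁ ⊔ Tφ₂ :=
      (le_sup_right.trans le_sup_left).trans le_sup_right
    have m6 : modA (ee 2 ⊗ₜ[ℂ] ee 2 + ee 3 ⊗ₜ[ℂ] ee 3) ≤ Tφ₁ ⊔ Tφ₂ :=
      le_sup_right.trans le_sup_right
    have a0m : aa 0 ∈ Submodule.span ℂ {aa 0} := Submodule.mem_span_singleton_self _
    have a1m : aa 1 ∈ Submodule.span ℂ {aa 1} := Submodule.mem_span_singleton_self _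
    have e0m : ee 0 ∈ Submodule.span ℂ {ee 0, ee 1} :=
      Submodule.subset_span (Set.mem_insert _ _)
    have e1m : ee 1 ∈ Submodule.span ℂ {ee 0, ee 1} :=
      Submodule.subset_span (Set.mem_insert_of_mem _ rfl)
    have e2m : ee 2 ∈ Submodule.span ℂ {ee 2, ee 3} :=
      Submodule.subset_span (Set.mem_insert _ _)
    have e3m : ee 3 ∈ Submodule.span ℂ {ee 2, ee 3} :=
      Submodule.subset_span (Set.mem_insert_of_mem _ rfl)
    have hA0 : ∀ j, f (aa 0 ⊗ₜ[ℂ] (ee j ⊗ₜ[ℂ] ee 0)) = 0 :=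
      fun j => hf _ (m1 (mem_tp3 a0m Submodule.mem_top e0m))
    have hA1 : ∀ j, f (aa 0 ⊗ₜ[ℂ] (ee j ⊗ₜ[ℂ] ee 1)) = 0 :=
      fun j => hf _ (m1 (mem_tp3 a0m Submodule.mem_top e1m))
    have hB0 : ∀ k, f (aa 0 ⊗ₜ[ℂ] (ee 0 ⊗ₜ[ℂ] ee k)) = 0 :=
      fun k => hf _ (m2 (mem_tp3 a0m e0m Submodule.mem_top))
    have hB1 : ∀ k, f (aa 0 ⊗ₜ[ℂ] (ee 1 ⊗ₜ[ℂ] ee k)) = 0 :=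
      fun k => hf _ (m2 (mem_tp3 a0m e1m Submodule.mem_top))
    have hC2 : ∀ j, f (aa 1 ⊗ₜ[ℂ] (ee j ⊗ₜ[ℂ] ee 2)) = 0 :=
      fun j => hf _ (m4 (mem_tp3 a1m Submodule.mem_top e2m))
    have hC3 : ∀ j, f (aa 1 ⊗ₜ[ℂ] (ee j ⊗ₜ[ℂ] ee 3)) = 0 :=
      fun j => hf _ (m4 (mem_tp3 a1m Submodule.mem_top e3m))
    have hD2 : ∀ k, f (aa 1 ⊗ₜ[ℂ] (ee 2 ⊗ₜ[ℂ] ee k)) = 0 :=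
      fun k => hf _ (m5 (mem_tp3 a1m e2m Submodule.mem_top))
    have hD3 : ∀ k, f (aa 1 ⊗ₜ[ℂ] (ee 3 ⊗ₜ[ℂ] ee k)) = 0 :=
      fun k => hf _ (m5 (mem_tp3 a1m e3m Submodule.mem_top))
    have hr1 : f (aa 1 ⊗ₜ[ℂ] (ee 1 ⊗ₜ[ℂ] ee 1)) = - f (aa 1 ⊗ₜ[ℂ] (ee 0 ⊗ₜ[ℂ] ee 0)) := by
      have h := hf _ (m3 ⟨aa 1, rfl⟩)
      simp only [LinearMap.add_apply, LinearMap.flip_apply, TensorProduct.mk_apply,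
        TensorProduct.tmul_add, map_add] at h
      linear_combination h
    have hr2 : f (aa 0 ⊗ₜ[ℂ] (ee 2 ⊗ₜ[ℂ] ee 2)) = - f (aa 0 ⊗ₜ[ℂ] (ee 3 ⊗ₜ[ℂ] ee 3)) := by
      have h := hf _ (m6 ⟨aa 0, rfl⟩)
      simp only [LinearMap.add_apply, LinearMap.flip_apply, TensorProduct.mk_apply,
        TensorProduct.tmul_add, map_add] at h
      linear_combination h
    have key : f =
        f (aa 1 ⊗ₜ[ℂ] (ee 0 ⊗ₜ[ℂ] ee 1)) • dfun (aa' 1) (ee' 0) (ee' 1) +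
        f (aa 1 ⊗ₜ[ℂ] (ee 1 ⊗ₜ[ℂ] ee 0)) • dfun (aa' 1) (ee' 1) (ee' 0) +
        f (aa 1 ⊗ₜ[ℂ] (ee 0 ⊗ₜ[ℂ] ee 0)) •
          (dfun (aa' 1) (ee' 0) (ee' 0) - dfun (aa' 1) (ee' 1) (ee' 1)) +
        f (aa 0 ⊗ₜ[ℂ] (ee 3 ⊗ₜ[ℂ] ee 2)) • dfun (aa' 0) (ee' 3) (ee' 2) +
        f (aa 0 ⊗ₜ[ℂ] (ee 2 ⊗ₜ[ℂ] ee 3)) • dfun (aa' 0) (ee' 2) (ee' 3) +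
        f (aa 0 ⊗ₜ[ℂ] (ee 3 ⊗ₜ[ℂ] ee 3)) •
          (dfun (aa' 0) (ee' 3) (ee' 3) - dfun (aa' 0) (ee' 2) (ee' 2)) := by
      refine B3.ext fun p => ?_
      obtain ⟨i, j, k⟩ := p
      rw [B3_apply]
      fin_cases i <;> fin_cases j <;> fin_cases k <;>
        simp [dfun_apply, aa'_aa, ee'_ee, hA0, hA1, hB0, hB1, hC2, hC3, hD2, hD3, hr1, hr2]
    rw [key]
    refine add_mem (add_mem (add_mem (add_mem (add_mem
      (Submodule.smul_mem _ _ (Submodule.subset_span (Set.mem_insert _ _)))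
      (Submodule.smul_mem _ _ (Submodule.subset_span
        (Set.mem_insert_of_mem _ (Set.mem_insert _ _)))))
      (Submodule.smul_mem _ _ (Submodule.subset_span
        (Set.mem_insert_of_mem _ (Set.mem_insert_of_mem _ (Set.mem_insert _ _))))))
      (Submodule.smul_mem _ _ (Submodule.subset_span
        (Set.mem_insert_of_mem _ (Set.mem_insert_of_mem _ (Set.mem_insert_of_mem _
          (Set.mem_insert _ _)))))))
      (Submodule.smul_mem _ _ (Submodule.subset_span
        (Set.mem_insert_of_mem _ (Set.mem_insert_of_mem _ (Set.mem_insert_of_mem _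
          (Set.mem_insert_of_mem _ (Set.mem_insert _ _))))))))
      (Submodule.smul_mem _ _ (Submodule.subset_span
        (Set.mem_insert_of_mem _ (Set.mem_insert_of_mem _ (Set.mem_insert_of_mem _
          (Set.mem_insert_of_mem _ (Set.mem_insert_of_mem _ rfl)))))))
  · -- span ⊆ annihilator
    rw [Submodule.span_le]
    rintro v (rfl | rfl | rfl | rfl | rfl | rfl) <;>
    · unfold Tφ₁ Tφ₂
      refine SetLike.mem_coe.mpr (mem_ann_of_le (sup_le (sup_le (sup_le
        (tp3_le_ker _ ?_) (tp3_le_ker _ ?_)) (modA_le_ker _ _ ?_))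
        (sup_le (sup_le (tp3_le_ker _ ?_) (tp3_le_ker _ ?_)) (modA_le_ker _ _ ?_))))
      all_goals first
      | · intro x hx y hy z hz
          rw [Submodule.mem_span_singleton] at hx
          obtain ⟨c, rfl⟩ := hx
          try (rw [Submodule.mem_span_pair] at hz; obtain ⟨a, b, rfl⟩ := hz)
          try (rw [Submodule.mem_span_pair] at hy; obtain ⟨a, b, rfl⟩ := hy)
          simp [LinearMap.sub_apply, dfun_apply, aa'_aa, ee'_ee]
      | · intro x
          simp [TensorProduct.tmul_add, LinearMap.sub_apply, dfun_apply, aa'_aa, ee'_ee]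
end
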